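/- For any odd positive integers w1, w2, w3, any complex numbers y1, y2, and any nonnegative integer n: w3^n Σ_{k=0}^{n} (n choose k) E_{k,χ}(w1 y1) Σ_{a=0}^{w3 d − 1} (−1)^a χ(a) E_{n−k,χ}(w2 y2 + (w2/w3) a) w1^{n−k} w2^{k} is symmetric in w1 and w2; that is, it equals w3^n Σ_{k=0}^{n} (n choose k) E_{k,χ}(w2 y1) Σ_{a=0}^{w3 d − 1} (−1)^a χ(a) E_{n−k,χ}(w1 y2 + (w1/w3) a) w2^{n−k} w1^{k}. -/

import Mathlib

open Finset

/-- The formal exponential power series `e^{ct} = Σ cⁿ tⁿ/n!` in `ℂ[[t]]`. -/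
noncomputable def expPS (c : ℂ) : PowerSeries ℂ :=
  PowerSeries.mk fun n => c ^ n / n.factorial

/-- `Σ_{a=0}^{d-1} (-1)^a χ(a) e^{at}` as a formal power series. -/
noncomputable def altSum (χ : ℤ → ℂ) (d : ℕ) : PowerSeries ℂ :=
  ∑ a ∈ Finset.range d, ((-1 : ℂ) ^ a * χ (a : ℤ)) • expPS (a : ℂ)

/-- `E` is the family of generalized Euler polynomials attached to `χ` mod `d`:
`(Σ_{n≥0} E_{n,χ}(x) tⁿ/n!) · (e^{dt}+1) = 2 e^{xt} · Σ_{a=0}^{d-1} (-1)^a χ(a) e^{at}`. -/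
def IsGenEuler (d : ℕ) (χ : ℤ → ℂ) (E : ℕ → ℂ → ℂ) : Prop :=
  ∀ x : ℂ, (PowerSeries.mk fun n => E n x / n.factorial) * (expPS (d : ℂ) + 1)
    = (2 : PowerSeries ℂ) * expPS x * altSum χ d

/-- The alternating generalized power sum `T_k(n,χ) = Σ_{a=0}^{n} (-1)^a χ(a) a^k`
(with the convention `0^0 = 1`). -/
noncomputable def altPowSum (χ : ℤ → ℂ) (k n : ℕ) : ℂ :=
  ∑ a ∈ Finset.range (n + 1), (-1 : ℂ) ^ a * χ (a : ℤ) * (a : ℂ) ^ k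

/-- The multinomial coefficient `(k+l+m)! / (k! l! m!)`. -/
def multinom (k l m : ℕ) : ℕ :=
  (k + l + m).factorial / (k.factorial * l.factorial * m.factorial)

lemma expPS_eq (c : ℂ) : expPS c = PowerSeries.rescale c (PowerSeries.exp ℂ) := by
  ext n
  simp [expPS, PowerSeries.coeff_rescale, PowerSeries.coeff_exp,
    div_eq_mul_inv, map_div₀, map_natCast]

lemma expPS_add (x y : ℂ) : expPS (x + y) = expPS x * expPS y := by
  rw [expPS_eq, expPS_eq, expPS_eq, PowerSeries.exp_mul_exp_eq_exp_add]

lemma rescale_expPS (c x : ℂ) :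
    PowerSeries.rescale c (expPS x) = expPS (c * x) := by
  rw [expPS_eq, expPS_eq, PowerSeries.rescale_rescale, mul_comm]

lemma constantCoeff_expPS (c : ℂ) :
    PowerSeries.constantCoeff (expPS c) = 1 := by
  simp [expPS, ← PowerSeries.coeff_zero_eq_constantCoeff]

lemma rescale_smul (c a : ℂ) (f : PowerSeries ℂ) :
    PowerSeries.rescale c (a • f) = a • PowerSeries.rescale c f := by
  ext n
  simp [PowerSeries.coeff_rescale]
  ring

section Main

variable {d : ℕ} {χ : ℤ → ℂ} {E : ℕ → ℂ → ℂ}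

/-- rescaled version of the defining identity. -/
lemma hA (hE : IsGenEuler d χ E) (c x : ℂ) :
    PowerSeries.rescale c (PowerSeries.mk fun m => E m x / m.factorial) *
      (expPS (c * d) + 1)
    = 2 * expPS (c * x) * PowerSeries.rescale c (altSum χ d) := by
  have h := congrArg (PowerSeries.rescale c) (hE x)
  simpa [map_mul, map_add, map_one, rescale_expPS, map_ofNat] using h

/-- summed version of the defining identity. -/
lemma hB (hE : IsGenEuler d χ E) (N : ℕ) (x : ℕ → ℂ) :
    (∑ a ∈ range N, ((-1 : ℂ) ^ a * χ (a : ℤ)) •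
        PowerSeries.mk fun m => E m (x a) / m.factorial) * (expPS (d : ℂ) + 1)
    = 2 * (∑ a ∈ range N, ((-1 : ℂ) ^ a * χ (a : ℤ)) • expPS (x a)) * altSum χ d := by
  rw [Finset.sum_mul]
  have : ∀ a ∈ range N, ((-1 : ℂ) ^ a * χ (a : ℤ)) •
        (PowerSeries.mk fun m => E m (x a) / m.factorial) * (expPS (d : ℂ) + 1)
      = ((-1 : ℂ) ^ a * χ (a : ℤ)) • (2 * expPS (x a) * altSum χ d) := by
    intro a _
    rw [smul_mul_assoc, hE (x a)]
  rw [Finset.sum_congr rfl this]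
  rw [Finset.mul_sum, Finset.sum_mul]
  refine Finset.sum_congr rfl fun a _ => ?_
  rw [mul_smul_comm, smul_mul_assoc]

end Main

theorem genEuler_series_symm (d : ℕ) (χ : ℤ → ℂ) (E : ℕ → ℂ → ℂ) (hE : IsGenEuler d χ E)
    (w3 : ℕ) (hw3 : (w3 : ℂ) ≠ 0) (y1 y2 : ℂ) (u v : ℂ) :
    PowerSeries.rescale (v * w3) (PowerSeries.mk fun m => E m (u * y1) / m.factorial) *
      PowerSeries.rescale (u * w3) (∑ a ∈ range (w3 * d), ((-1 : ℂ) ^ a * χ (a : ℤ)) •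
        PowerSeries.mk fun m => E m (v * y2 + v / w3 * a) / m.factorial)
    = PowerSeries.rescale (u * w3) (PowerSeries.mk fun m => E m (v * y1) / m.factorial) *
      PowerSeries.rescale (v * w3) (∑ a ∈ range (w3 * d), ((-1 : ℂ) ^ a * χ (a : ℤ)) •
        PowerSeries.mk fun m => E m (u * y2 + u / w3 * a) / m.factorial) := by
  -- key: multiply with the invertible factors
  have key : ∀ u v : ℂ,
      (PowerSeries.rescale (v * w3) (PowerSeries.mk fun m => E m (u * y1) / m.factorial) *
        PowerSeries.rescale (u * w3) (∑ a ∈ range (w3 * d), ((-1 : ℂ) ^ a * χ (a : ℤ)) •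
          PowerSeries.mk fun m => E m (v * y2 + v / w3 * a) / m.factorial)) *
      ((expPS ((v * w3) * d) + 1) * (expPS ((u * w3) * d) + 1))
      = 4 * expPS (u * v * w3 * y1) * expPS (u * v * w3 * y2) *
        (∑ a ∈ range (w3 * d), ((-1 : ℂ) ^ a * χ (a : ℤ)) • expPS (u * v * a)) *
        (PowerSeries.rescale (u * w3) (altSum χ d) *
          PowerSeries.rescale (v * w3) (altSum χ d)) := by
    intro u v
    have h1 := hA hE (v * w3) (u * y1)
    have h2 := congrArg (PowerSeries.rescale (u * w3))
      (hB hE (w3 * d) (fun a => v * y2 + v / w3 * a))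
    simp only [map_mul, map_add, map_one, map_sum, rescale_smul, rescale_expPS,
      map_ofNat] at h2
    -- simplify the exp arguments in h2
    have harg : ∀ a : ℕ, (u * w3) * (v * y2 + v / w3 * a) = u * v * w3 * y2 + u * v * a := by
      intro a; field_simp
    simp only [harg, expPS_add] at h2
    calc (PowerSeries.rescale (v * w3) (PowerSeries.mk fun m => E m (u * y1) / m.factorial) *
        PowerSeries.rescale (u * w3) (∑ a ∈ range (w3 * d), ((-1 : ℂ) ^ a * χ (a : ℤ)) •
          PowerSeries.mk fun m => E m (v * y2 + v / w3 * a) / m.factorial)) *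
      ((expPS ((v * w3) * d) + 1) * (expPS ((u * w3) * d) + 1))
        = (PowerSeries.rescale (v * w3) (PowerSeries.mk fun m => E m (u * y1) / m.factorial) *
            (expPS ((v * w3) * d) + 1)) *
          ((PowerSeries.rescale (u * w3) (∑ a ∈ range (w3 * d), ((-1 : ℂ) ^ a * χ (a : ℤ)) •
            PowerSeries.mk fun m => E m (v * y2 + v / w3 * a) / m.factorial)) *
            (expPS ((u * w3) * d) + 1)) := by ring
      _ = (2 * expPS ((v * w3) * (u * y1)) * PowerSeries.rescale (v * w3) (altSum χ d)) *
          (2 * (∑ a ∈ range (w3 * d), ((-1 : ℂ) ^ a * χ (a : ℤ)) •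
            (expPS (u * v * w3 * y2) * expPS (u * v * a))) *
            PowerSeries.rescale (u * w3) (altSum χ d)) := by
          simp only [map_sum, rescale_smul]
          rw [h1, h2]
      _ = _ := by
          have : (v * w3) * (u * y1) = u * v * w3 * y1 := by ring
          rw [this]
          simp only [← mul_smul_comm, ← Finset.mul_sum]
          ring
  have hsym : ∀ u v : ℂ,
      4 * expPS (u * v * w3 * y1) * expPS (u * v * w3 * y2) *
        (∑ a ∈ range (w3 * d), ((-1 : ℂ) ^ a * χ (a : ℤ)) • expPS (u * v * a)) *
        (PowerSeries.rescale (u * w3) (altSum χ d) *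
          PowerSeries.rescale (v * w3) (altSum χ d))
      = 4 * expPS (v * u * w3 * y1) * expPS (v * u * w3 * y2) *
        (∑ a ∈ range (w3 * d), ((-1 : ℂ) ^ a * χ (a : ℤ)) • expPS (v * u * a)) *
        (PowerSeries.rescale (v * w3) (altSum χ d) *
          PowerSeries.rescale (u * w3) (altSum χ d)) := by
    intro u v
    simp only [mul_comm u v]
    ring
  have hUne : (expPS ((v * w3) * d) + 1) * (expPS ((u * w3) * d) + 1) ≠ 0 := by
    intro h
    have := congrArg (PowerSeries.constantCoeff) h
    simp [constantCoeff_expPS] at this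
  have k1 := key u v
  have k2 := key v u
  rw [hsym u v] at k1
  rw [show (expPS ((u * w3) * d) + 1) * (expPS ((v * w3) * d) + 1)
      = (expPS ((v * w3) * d) + 1) * (expPS ((u * w3) * d) + 1) from mul_comm _ _] at k2
  exact mul_right_cancel₀ hUne (k1.trans k2.symm)

theorem genEuler_coeff (d : ℕ) (χ : ℤ → ℂ) (E : ℕ → ℂ → ℂ)
    (w3 : ℕ) (y1 y2 : ℂ) (n : ℕ) (u v : ℂ) :
    (w3 : ℂ) ^ n * ∑ k ∈ range (n + 1),
      (n.choose k : ℂ) * E k (u * y1) *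
        (∑ a ∈ range (w3 * d), (-1 : ℂ) ^ a * χ (a : ℤ) *
          E (n - k) (v * y2 + v / w3 * a)) * u ^ (n - k) * v ^ k
    = (n.factorial : ℂ) * PowerSeries.coeff n
      (PowerSeries.rescale (v * w3) (PowerSeries.mk fun m => E m (u * y1) / m.factorial) *
        PowerSeries.rescale (u * w3) (∑ a ∈ range (w3 * d), ((-1 : ℂ) ^ a * χ (a : ℤ)) •
          PowerSeries.mk fun m => E m (v * y2 + v / w3 * a) / m.factorial)) := by
  rw [PowerSeries.coeff_mul, Finset.Nat.sum_antidiagonal_eq_sum_range_succ_mk,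
    Finset.mul_sum, Finset.mul_sum]
  refine Finset.sum_congr rfl fun k hk => ?_
  have hk' : k ≤ n := Nat.lt_succ_iff.mp (Finset.mem_range.mp hk)
  have hf1 : (k.factorial : ℂ) ≠ 0 := Nat.cast_ne_zero.mpr k.factorial_ne_zero
  have hf2 : ((n - k).factorial : ℂ) ≠ 0 := Nat.cast_ne_zero.mpr (n - k).factorial_ne_zero
  rw [PowerSeries.coeff_rescale, PowerSeries.coeff_rescale, map_sum]
  simp only [PowerSeries.coeff_smul, PowerSeries.coeff_mk, smul_eq_mul]
  have hS : ∑ a ∈ range (w3 * d), (-1 : ℂ) ^ a * χ (a : ℤ) *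
        (E (n - k) (v * y2 + v / w3 * a) / (n - k).factorial)
      = (∑ a ∈ range (w3 * d), (-1 : ℂ) ^ a * χ (a : ℤ) *
        E (n - k) (v * y2 + v / w3 * a)) / (n - k).factorial := by
    rw [Finset.sum_div]
    exact Finset.sum_congr rfl fun a _ => (mul_div_assoc _ _ _).symm
  rw [hS, Nat.cast_choose ℂ hk', mul_pow, mul_pow]
  have hw : (w3 : ℂ) ^ n = w3 ^ k * w3 ^ (n - k) := by
    rw [← pow_add, Nat.add_sub_cancel' hk']
  rw [hw]
  field_simp

/-- The expression (a-1(2)) for `I(Λ²₃¹)` is symmetric in `w₁` and `w₂`. -/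
theorem stmt_13 (d : ℕ) (hd : Odd d) (hd0 : 0 < d) (χ : ℤ → ℂ)
    (hper : ∀ a : ℤ, χ (a + d) = χ a)
    (hmul : ∀ a b : ℤ, χ (a * b) = χ a * χ b) (hone : χ 1 = 1)
    (hvan : ∀ a : ℤ, 1 < Int.gcd a d → χ a = 0)
    (E : ℕ → ℂ → ℂ) (hE : IsGenEuler d χ E)
    (w1 w2 w3 : ℕ) (hw1 : 0 < w1) (hw2 : 0 < w2) (hw3 : 0 < w3)
    (hw1o : Odd w1) (hw2o : Odd w2) (hw3o : Odd w3)
    (y1 y2 : ℂ) (n : ℕ) :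
    ((w3 : ℂ) ^ n * ∑ k ∈ range (n + 1),
      (n.choose k : ℂ) * E k ((w1 : ℂ) * y1) *
        (∑ a ∈ range (w3 * d), (-1 : ℂ) ^ a * χ (a : ℤ) *
          E (n - k) ((w2 : ℂ) * y2 + (w2 : ℂ) / (w3 : ℂ) * (a : ℂ))) *
        (w1 : ℂ) ^ (n - k) * (w2 : ℂ) ^ k)
    = (w3 : ℂ) ^ n * ∑ k ∈ range (n + 1),
      (n.choose k : ℂ) * E k ((w2 : ℂ) * y1) *
        (∑ a ∈ range (w3 * d), (-1 : ℂ) ^ a * χ (a : ℤ) *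
          E (n - k) ((w1 : ℂ) * y2 + (w1 : ℂ) / (w3 : ℂ) * (a : ℂ))) *
        (w2 : ℂ) ^ (n - k) * (w1 : ℂ) ^ k := by
  have hw3c : (w3 : ℂ) ≠ 0 := Nat.cast_ne_zero.mpr hw3.ne'
  calc ((w3 : ℂ) ^ n * ∑ k ∈ range (n + 1),
      (n.choose k : ℂ) * E k ((w1 : ℂ) * y1) *
        (∑ a ∈ range (w3 * d), (-1 : ℂ) ^ a * χ (a : ℤ) *
          E (n - k) ((w2 : ℂ) * y2 + (w2 : ℂ) / (w3 : ℂ) * (a : ℂ))) *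
        (w1 : ℂ) ^ (n - k) * (w2 : ℂ) ^ k)
      = (n.factorial : ℂ) * PowerSeries.coeff n
        (PowerSeries.rescale ((w2 : ℂ) * w3)
            (PowerSeries.mk fun m => E m ((w1 : ℂ) * y1) / m.factorial) *
          PowerSeries.rescale ((w1 : ℂ) * w3)
            (∑ a ∈ range (w3 * d), ((-1 : ℂ) ^ a * χ (a : ℤ)) •
              PowerSeries.mk fun m =>
                E m ((w2 : ℂ) * y2 + (w2 : ℂ) / w3 * a) / m.factorial)) :=
      genEuler_coeff d χ E w3 y1 y2 n w1 w2
    _ = (n.factorial : ℂ) * PowerSeries.coeff n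
        (PowerSeries.rescale ((w1 : ℂ) * w3)
            (PowerSeries.mk fun m => E m ((w2 : ℂ) * y1) / m.factorial) *
          PowerSeries.rescale ((w2 : ℂ) * w3)
            (∑ a ∈ range (w3 * d), ((-1 : ℂ) ^ a * χ (a : ℤ)) •
              PowerSeries.mk fun m =>
                E m ((w1 : ℂ) * y2 + (w1 : ℂ) / w3 * a) / m.factorial)) := by
      rw [genEuler_series_symm d χ E hE w3 hw3c y1 y2 w1 w2]
    _ = _ := (genEuler_coeff d χ E w3 y1 y2 n w2 w1).symm
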